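/- Let a < b be real numbers, let x_1, …, x_r be distinct points of (a,b) with positive integer multiplicities m_1, …, m_r, set h(x) = ∏_{i=1}^r (x − x_i)^{m_i} and n = ∑ m_i. Let f : ℝ → ℝ be continuous on [a,b], n-times differentiable on (a,b), and m_i-times continuously differentiable on a neighborhood of x_i for a fixed index i. Let g be a real polynomial with deg g < n such that f^{(k)}(x_j) = g^{(k)}(x_j) for every j ∈ {1,…,r} and every 0 ≤ k < m_j. Then there exists c ∈ (a,b) such that (f^{(m_i)}(x_i) − g^{(m_i)}(x_i)) / h^{(m_i)}(x_i) = f^{(n)}(c)/n!. -/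

import Mathlib

open Set Polynomial

private lemma iteratedDeriv_polyEval (l : ℕ) : ∀ P : Polynomial ℝ,
    iteratedDeriv l (fun t => P.eval t) = fun t => (Polynomial.derivative^[l] P).eval t := by
  induction l with
  | zero => intro P; simp
  | succ l ih =>
    intro P
    rw [iteratedDeriv_succ']
    have hd : deriv (fun t => P.eval t) = fun t => P.derivative.eval t :=
      funext fun t => P.deriv
    rw [hd, ih, Function.iterate_succ_apply]

private lemma sub_poly_iteratedDeriv (s : Set ℝ) (hs : IsOpen s) (f : ℝ → ℝ) (P : Polynomial ℝ)
    (n : ℕ) (hf : ∀ k < n, DifferentiableOn ℝ (iteratedDeriv k f) s) :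
    ∀ l ≤ n, ∀ y ∈ s, iteratedDeriv l (fun t => f t - P.eval t) y
      = iteratedDeriv l f y - (Polynomial.derivative^[l] P).eval y := by
  intro l
  induction l with
  | zero => intro _ y _; simp
  | succ l ih =>
    intro hl y hy
    have hev : (iteratedDeriv l fun t => f t - P.eval t) =ᶠ[nhds y]
        fun t => iteratedDeriv l f t - (Polynomial.derivative^[l] P).eval t :=
      Filter.eventuallyEq_of_mem (hs.mem_nhds hy) fun z hz => ih (by omega) z hz
    rw [iteratedDeriv_succ, hev.deriv_eq]
    have hdf : DifferentiableAt ℝ (iteratedDeriv l f) y :=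
      (hf l (by omega) y hy).differentiableAt (hs.mem_nhds hy)
    have hdp : DifferentiableAt ℝ (fun t => (Polynomial.derivative^[l] P).eval t) y :=
      (Polynomial.differentiable _).differentiableAt
    rw [deriv_fun_sub hdf hdp, ← iteratedDeriv_succ]
    congr 1
    rw [(Polynomial.derivative^[l] P).deriv, Function.iterate_succ_apply']
open Set Polynomial

private lemma rolle_config (lo hi : ℝ) (F : ℝ → ℝ) (hF : ContinuousOn F (Set.Ioo lo hi))
    (t : Finset ℝ) :
    ∀ μ : ℝ → ℕ, (∀ y ∈ t, y ∈ Set.Ioo lo hi) → (∀ y ∈ t, 1 ≤ μ y) →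
    (∀ y ∈ t, ∀ l < μ y, iteratedDeriv l F y = 0) →
    ∃ t' : Finset ℝ, ∃ μ' : ℝ → ℕ,
      (∀ y ∈ t', y ∈ Set.Ioo lo hi) ∧ (∀ y ∈ t', 1 ≤ μ' y) ∧
      (∀ y ∈ t', ∀ l < μ' y, iteratedDeriv l (deriv F) y = 0) ∧
      (∀ y ∈ t', ∃ z ∈ t, y ≤ z) ∧ (∑ y ∈ t, μ y ≤ (∑ y ∈ t', μ' y) + 1) := by
  classical
  induction t using Finset.induction_on_max with
  | empty => exact fun μ _ _ _ => ⟨∅, μ, by simp⟩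
  | insert a s hs ih =>
    intro μ hI hμ hz
    have has : a ∉ s := fun hmem => lt_irrefl a (hs a hmem)
    have haI : a ∈ Set.Ioo lo hi := hI a (Finset.mem_insert_self a s)
    have hza : ∀ l < μ a, iteratedDeriv l F a = 0 := hz a (Finset.mem_insert_self a s)
    have hμa : 1 ≤ μ a := hμ a (Finset.mem_insert_self a s)
    have hzsucc : ∀ l < μ a - 1, iteratedDeriv l (deriv F) a = 0 := by
      intro l hl
      rw [← iteratedDeriv_succ']
      exact hza (l + 1) (by omega)
    rcases s.eq_empty_or_nonempty with rfl | hne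
    · by_cases hca : μ a ≤ 1
      · refine ⟨∅, μ, by simp, by simp, by simp, by simp, ?_⟩
        simpa using hca
      · refine ⟨{a}, fun _ => μ a - 1, ?_, ?_, ?_, ?_, ?_⟩
        · intro y hy; rw [Finset.mem_singleton] at hy; exact hy ▸ haI
        · intro y _; show 1 ≤ μ a - 1; omega
        · intro y hy; rw [Finset.mem_singleton] at hy; exact hy ▸ hzsucc
        · intro y hy; rw [Finset.mem_singleton] at hy
          exact ⟨a, Finset.mem_insert_self a ∅, le_of_eq hy⟩
        · rw [Finset.sum_insert (Finset.notMem_empty a), Finset.sum_empty,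
            Finset.sum_singleton]
          omega
    · obtain ⟨t₀, μ₀, hI₀, hμ₀, hz₀, hb₀, hsum₀⟩ :=
        ih μ (fun y hy => hI y (Finset.mem_insert_of_mem hy))
          (fun y hy => hμ y (Finset.mem_insert_of_mem hy))
          (fun y hy => hz y (Finset.mem_insert_of_mem hy))
      set M := s.max' hne with hM
      have hMs : M ∈ s := s.max'_mem hne
      have hMa : M < a := hs M hMs
      have hMI : M ∈ Set.Ioo lo hi := hI M (Finset.mem_insert_of_mem hMs)
      have hFM : F M = 0 := by
        simpa using hz M (Finset.mem_insert_of_mem hMs) 0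
          (hμ M (Finset.mem_insert_of_mem hMs))
      have hFa : F a = 0 := by simpa using hza 0 hμa
      have hsubI : Set.Icc M a ⊆ Set.Ioo lo hi := Set.ordConnected_Ioo.out hMI haI
      obtain ⟨c, hc, hc0⟩ := exists_deriv_eq_zero hMa (hF.mono hsubI) (hFM.trans hFa.symm)
      have hcI : c ∈ Set.Ioo lo hi := hsubI (Set.Ioo_subset_Icc_self hc)
      have hlt : ∀ y ∈ t₀, y < c := by
        intro y hy
        obtain ⟨z, hzs, hyz⟩ := hb₀ y hy
        exact lt_of_le_of_lt (hyz.trans (s.le_max' z hzs)) hc.1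
      have hct₀ : c ∉ t₀ := fun hmem => lt_irrefl c (hlt c hmem)
      have hane : a ∉ insert c t₀ := by
        intro hmem
        rcases Finset.mem_insert.mp hmem with hmem | hmem
        · exact absurd hc.2 (hmem ▸ lt_irrefl a)
        · exact absurd ((hlt a hmem).trans hc.2) (lt_irrefl a)
      set μ' : ℝ → ℕ := fun z => if z = a then μ a - 1 else if z = c then 1 else μ₀ z with hμ'
      have hμ'c : μ' c = 1 := by
        simp [hμ', ne_of_lt hc.2]
      have hμ't₀ : ∀ y ∈ t₀, μ' y = μ₀ y := by
        intro y hy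
        have h1 : y ≠ a := ne_of_lt ((hlt y hy).trans hc.2)
        have h2 : y ≠ c := ne_of_lt (hlt y hy)
        simp only [hμ', if_neg h1, if_neg h2]
      have hbase_mem : ∀ y ∈ insert c t₀, y ∈ Set.Ioo lo hi := by
        intro y hy
        rcases Finset.mem_insert.mp hy with rfl | hy
        · exact hcI
        · exact hI₀ y hy
      have hbase_pos : ∀ y ∈ insert c t₀, 1 ≤ μ' y := by
        intro y hy
        rcases Finset.mem_insert.mp hy with rfl | hy
        · omega
        · rw [hμ't₀ y hy]; exact hμ₀ y hy
      have hbase_zero : ∀ y ∈ insert c t₀, ∀ l < μ' y, iteratedDeriv l (deriv F) y = 0 := by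
        intro y hy l hl
        rcases Finset.mem_insert.mp hy with rfl | hy
        · rw [hμ'c] at hl
          interval_cases l
          simpa using hc0
        · rw [hμ't₀ y hy] at hl
          exact hz₀ y hy l hl
      have hbase_bd : ∀ y ∈ insert c t₀, ∃ z ∈ insert a s, y ≤ z := by
        intro y hy
        refine ⟨a, Finset.mem_insert_self a s, ?_⟩
        rcases Finset.mem_insert.mp hy with rfl | hy
        · exact le_of_lt hc.2
        · exact le_of_lt ((hlt y hy).trans hc.2)
      have hsum_base : (∑ y ∈ insert c t₀, μ' y) = 1 + ∑ y ∈ t₀, μ₀ y := by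
        rw [Finset.sum_insert hct₀, hμ'c]
        congr 1
        exact Finset.sum_congr rfl hμ't₀
      have hsum_top : (∑ y ∈ insert a s, μ y) = μ a + ∑ y ∈ s, μ y :=
        Finset.sum_insert has
      by_cases hca : μ a ≤ 1
      · refine ⟨insert c t₀, μ', hbase_mem, hbase_pos, hbase_zero, hbase_bd, ?_⟩
        rw [hsum_top, hsum_base]
        omega
      · refine ⟨insert a (insert c t₀), μ', ?_, ?_, ?_, ?_, ?_⟩
        · intro y hy
          rcases Finset.mem_insert.mp hy with rfl | hy
          · exact haI
          · exact hbase_mem y hy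
        · intro y hy
          rcases Finset.mem_insert.mp hy with rfl | hy
          · simp only [hμ', if_pos rfl]; omega
          · exact hbase_pos y hy
        · intro y hy l hl
          rcases Finset.mem_insert.mp hy with rfl | hy
          · simp only [hμ', if_pos rfl] at hl
            exact hzsucc l hl
          · exact hbase_zero y hy l hl
        · intro y hy
          rcases Finset.mem_insert.mp hy with rfl | hy
          · exact ⟨y, Finset.mem_insert_self y s, le_refl y⟩
          · exact hbase_bd y hy
        · rw [hsum_top, Finset.sum_insert hane, hsum_base]
          simp only [hμ', if_pos rfl]
          omega

private lemma iterated_rolle (lo hi : ℝ) : ∀ (N : ℕ) (F : ℝ → ℝ),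
    (∀ k < N, ContinuousOn (iteratedDeriv k F) (Set.Ioo lo hi)) →
    ∀ (t : Finset ℝ) (μ : ℝ → ℕ), (∀ y ∈ t, y ∈ Set.Ioo lo hi) →
    (∀ y ∈ t, 1 ≤ μ y) → (∀ y ∈ t, ∀ l < μ y, iteratedDeriv l F y = 0) →
    N + 1 ≤ ∑ y ∈ t, μ y →
    ∃ c ∈ Set.Ioo lo hi, iteratedDeriv N F c = 0 := by
  intro N
  induction N with
  | zero =>
    intro F _ t μ hI hμ hz hsum
    have hne : t.Nonempty := by
      by_contra hc
      rw [Finset.not_nonempty_iff_eq_empty] at hc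
      simp [hc] at hsum
    obtain ⟨y, hy⟩ := hne
    exact ⟨y, hI y hy, by simpa using hz y hy 0 (hμ y hy)⟩
  | succ N ih =>
    intro F hreg t μ hI hμ hz hsum
    have hF : ContinuousOn F (Set.Ioo lo hi) := by
      have h0 := hreg 0 (Nat.succ_pos N)
      rwa [iteratedDeriv_zero] at h0
    obtain ⟨t', μ', hI', hμ', hz', _, hsum'⟩ := rolle_config lo hi F hF t μ hI hμ hz
    have hreg' : ∀ k < N, ContinuousOn (iteratedDeriv k (deriv F)) (Set.Ioo lo hi) := by
      intro k hk
      have h1 := hreg (k + 1) (by omega)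
      rwa [iteratedDeriv_succ'] at h1
    obtain ⟨c, hc, h0⟩ := ih (deriv F) hreg' t' μ' hI' hμ' hz' (by omega)
    exact ⟨c, hc, by rwa [iteratedDeriv_succ']⟩

/-- **Generalized Taylor's Theorem at an interpolation node.**
Under the hypotheses of the generalized Taylor theorem with all nodes in `(a,b)`, and with `f`
additionally `m i`-times continuously differentiable near the node `x i`, the remainder at
`x = x i` takes the form
`(f^{(m i)}(x i) - g^{(m i)}(x i)) / h^{(m i)}(x i) = f^{(n)}(c) / n!` for some `c ∈ (a,b)`. -/
theorem generalized_taylor_at_node (a b : ℝ) (hab : a < b) (r : ℕ)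
    (x : Fin r → ℝ) (hx : Function.Injective x)
    (hxI : ∀ j, x j ∈ Set.Ioo a b)
    (m : Fin r → ℕ) (hm : ∀ j, 1 ≤ m j)
    (h : ℝ → ℝ) (hh : h = fun t => ∏ j, (t - x j) ^ m j)
    (n : ℕ) (hn : n = ∑ j, m j)
    (f : ℝ → ℝ) (hf_cont : ContinuousOn f (Set.Icc a b))
    (hf_diff : ∀ k < n, DifferentiableOn ℝ (iteratedDeriv k f) (Set.Ioo a b))
    (i : Fin r)
    (U : Set ℝ) (hU : IsOpen U) (hxiU : x i ∈ U)
    (hf_smooth : ContDiffOn ℝ (m i : ℕ∞) f U)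
    (g : Polynomial ℝ) (hg_deg : g.degree < n)
    (hinterp : ∀ j, ∀ k < m j,
      iteratedDeriv k f (x j) = (Polynomial.derivative^[k] g).eval (x j)) :
    ∃ c ∈ Set.Ioo a b,
      (iteratedDeriv (m i) f (x i) - (Polynomial.derivative^[m i] g).eval (x i)) /
          iteratedDeriv (m i) h (x i)
        = iteratedDeriv n f c / (n.factorial : ℝ) := by
  classical
  have hmi_le : m i ≤ n := by
    rw [hn]
    exact Finset.single_le_sum (f := m) (fun j _ => Nat.zero_le _) (Finset.mem_univ i)
  have hn_pos : 1 ≤ n := le_trans (hm i) hmi_le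
  set H : Polynomial ℝ := ∏ j, (X - C (x j)) ^ m j with hH
  have hHmonic : H.Monic := monic_prod_of_monic _ _ fun j _ => (monic_X_sub_C (x j)).pow _
  have hHne : H ≠ 0 := hHmonic.ne_zero
  have hHdeg : H.natDegree = n := by
    rw [hH, natDegree_prod _ _ fun j _ => pow_ne_zero _ (X_sub_C_ne_zero (x j)), hn]
    simp [natDegree_pow]
  have hhH : h = fun t => H.eval t := by
    funext t
    simp [hh, hH, eval_prod]
  -- root multiplicities at the nodes
  have hrm : ∀ j, (m j : ℕ) ≤ H.rootMultiplicity (x j) := by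
    intro j
    rw [le_rootMultiplicity_iff hHne]
    exact Finset.dvd_prod_of_mem _ (Finset.mem_univ j)
  have hHzero : ∀ j, ∀ l < m j, (Polynomial.derivative^[l] H).eval (x j) = 0 := fun j l hl =>
    isRoot_iterate_derivative_of_lt_rootMultiplicity (lt_of_lt_of_le hl (hrm j))
  -- exact multiplicity at x i
  have hrmi : H.rootMultiplicity (x i) = m i := by
    have h1 : H = (X - C (x i)) ^ m i * ∏ j ∈ Finset.univ.erase i, (X - C (x j)) ^ m j := by
      rw [hH, ← Finset.mul_prod_erase _ _ (Finset.mem_univ i)]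
    rw [h1, rootMultiplicity_mul (h1 ▸ hHne), rootMultiplicity_X_sub_C_pow,
      rootMultiplicity_eq_zero, add_zero]
    intro hroot
    rw [IsRoot, eval_prod] at hroot
    obtain ⟨j, hj, hj0⟩ := Finset.prod_eq_zero_iff.mp hroot
    rw [eval_pow, eval_sub, eval_X, eval_C] at hj0
    have hji : j ≠ i := (Finset.mem_erase.mp hj).1
    have hxx : x i - x j = 0 :=
      (pow_eq_zero_iff (Nat.one_le_iff_ne_zero.mp (hm j))).mp hj0
    exact hji (hx (sub_eq_zero.mp hxx)).symm
  have hDi : iteratedDeriv (m i) h (x i) = (Polynomial.derivative^[m i] H).eval (x i) := by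
    rw [hhH, iteratedDeriv_polyEval]
  have hDi_ne : (Polynomial.derivative^[m i] H).eval (x i) ≠ 0 := by
    rw [← hrmi, eval_iterate_derivative_rootMultiplicity, nsmul_eq_mul]
    exact mul_ne_zero (Nat.cast_ne_zero.mpr (Nat.factorial_ne_zero _))
      (eval_divByMonic_pow_rootMultiplicity_ne_zero (x i) hHne)
  set K : ℝ := (iteratedDeriv (m i) f (x i) - (Polynomial.derivative^[m i] g).eval (x i)) /
      iteratedDeriv (m i) h (x i) with hK
  set P : Polynomial ℝ := g + C K * H with hP
  have hPd : ∀ l, Polynomial.derivative^[l] P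
      = Polynomial.derivative^[l] g + C K * Polynomial.derivative^[l] H := by
    intro l
    rw [hP]
    induction l with
    | zero => simp
    | succ l ih =>
      rw [Function.iterate_succ_apply', ih, derivative_add, derivative_C_mul,
        Function.iterate_succ_apply', Function.iterate_succ_apply']
  set F : ℝ → ℝ := fun t => f t - P.eval t with hFdef
  have hsub : ∀ l ≤ n, ∀ y ∈ Set.Ioo a b,
      iteratedDeriv l F y = iteratedDeriv l f y - (Polynomial.derivative^[l] P).eval y := by
    simp only [hFdef]
    exact sub_poly_iteratedDeriv _ isOpen_Ioo f P n hf_diff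
  -- the configuration of zeros
  set μ : ℝ → ℕ := fun y => (∑ j, if x j = y then m j else 0) + (if y = x i then 1 else 0)
    with hμdef
  have hμx : ∀ j, μ (x j) = m j + (if j = i then 1 else 0) := by
    intro j
    simp only [hμdef, hx.eq_iff]
    rw [Finset.sum_ite_eq' Finset.univ j m]
    simp
  set t : Finset ℝ := Finset.image x Finset.univ with ht
  have hsumt : (∑ y ∈ t, μ y) = n + 1 := by
    rw [ht, Finset.sum_image (fun j _ j' _ e => hx e)]
    simp only [hμx]
    rw [Finset.sum_add_distrib, ← hn, Finset.sum_ite_eq' Finset.univ i (fun _ => 1)]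
    simp
  have hmem : ∀ y ∈ t, y ∈ Set.Ioo a b := by
    intro y hy
    obtain ⟨j, _, rfl⟩ := Finset.mem_image.mp hy
    exact hxI j
  have hpos : ∀ y ∈ t, 1 ≤ μ y := by
    intro y hy
    obtain ⟨j, _, rfl⟩ := Finset.mem_image.mp hy
    rw [hμx]
    have := hm j
    omega
  have hzero : ∀ y ∈ t, ∀ l < μ y, iteratedDeriv l F y = 0 := by
    intro y hy l hl
    obtain ⟨j, _, rfl⟩ := Finset.mem_image.mp hy
    rw [hμx] at hl
    have hmj_le : m j ≤ n := by
      rw [hn]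
      exact Finset.single_le_sum (f := m) (fun j _ => Nat.zero_le _) (Finset.mem_univ j)
    by_cases hlj : l < m j
    · rw [hsub l (by omega) (x j) (hxI j), hPd l, eval_add, eval_mul, eval_C,
        hHzero j l hlj, mul_zero, add_zero, hinterp j l hlj, sub_self]
    · have hji : j = i := by
        by_contra hne
        rw [if_neg hne] at hl
        omega
      subst hji
      have hlm : l = m j := by
        rw [if_pos rfl] at hl
        omega
      subst hlm
      rw [hsub (m j) hmi_le (x j) (hxI j), hPd, eval_add, eval_mul, eval_C]
      rw [hK, hDi, div_mul_cancel₀ _ hDi_ne]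
      ring
  have hreg : ∀ k < n, ContinuousOn (iteratedDeriv k F) (Set.Ioo a b) := by
    intro k hk
    exact ContinuousOn.congr
      ((hf_diff k hk).continuousOn.sub (Polynomial.continuous _).continuousOn)
      (fun y hy => hsub k (le_of_lt hk) y hy)
  obtain ⟨c, hc, hc0⟩ := iterated_rolle a b n F hreg t μ hmem hpos hzero (le_of_eq hsumt.symm)
  -- compute the n-th derivative of the polynomial part
  have hgn : Polynomial.derivative^[n] g = 0 := by
    apply iterate_derivative_eq_zero
    rcases eq_or_ne g 0 with rfl | hg
    · rw [natDegree_zero]; exact hn_pos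
    · exact (natDegree_lt_iff_degree_lt hg).mpr hg_deg
  have hHn : (Polynomial.derivative^[n] H).eval c = (n.factorial : ℝ) := by
    have hdeg0 : (Polynomial.derivative^[n] H).natDegree = 0 := by
      have h1 := natDegree_iterate_derivative H n
      omega
    rw [Polynomial.eq_C_of_natDegree_le_zero (le_of_eq hdeg0), eval_C,
      coeff_iterate_derivative, zero_add, Nat.descFactorial_self, ← hHdeg,
      hHmonic.coeff_natDegree, nsmul_eq_mul, mul_one]
  have hfc : iteratedDeriv n f c = K * (n.factorial : ℝ) := by
    have h2 := hsub n le_rfl c hc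
    rw [hc0, hPd, eval_add, eval_mul, eval_C, hgn, hHn] at h2
    simp at h2
    linarith [h2]
  refine ⟨c, hc, ?_⟩
  rw [hfc, mul_div_cancel_right₀ K (Nat.cast_ne_zero.mpr n.factorial_ne_zero)]
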